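/- Fix an integer K ≥ 1 and, for each k ∈ {0,…,K−1}, reals W_k > 0, ε_k > 0 and α_k ∈ ℝ; fix an integer N ≥ 1 and a real R > 0. Set W̄_k = W_k·(N−1) and define, for t > max_k(−α_k), f(t) = Σ_{k=0}^{K−1} ( W̄_k + √(W̄_k² + 4·W_k·ε_k·(α_k + t)) )/( 2·(α_k + t) ) − R − Σ_{k=0}^{K−1} ε_k. Then f is strictly decreasing on the interval (max_k(−α_k), ∞), f(t) → +∞ as t decreases to max_k(−α_k), f(t) → −R − Σ_k ε_k < 0 as t → ∞, and consequently f has exactly one zero in (max_k(−α_k), ∞). -/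

import Mathlib

open Finset

open Filter Set


private lemma sqrt_gt' (a b s : ℝ) (ha : 0 ≤ a) (hb : 0 < b) (hs : 0 < s) :
    a < Real.sqrt (a ^ 2 + b * s) := by
  have h1 : a = Real.sqrt (a ^ 2) := (Real.sqrt_sq ha).symm
  nth_rewrite 1 [h1]
  exact Real.sqrt_lt_sqrt (sq_nonneg a) (by nlinarith)

private lemma key' (a b s : ℝ) (ha : 0 ≤ a) (hb : 0 < b) (hs : 0 < s) :
    (a + Real.sqrt (a ^ 2 + b * s)) / (2 * s) =
      b / (2 * (Real.sqrt (a ^ 2 + b * s) - a)) := by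
  have hgt := sqrt_gt' a b s ha hb hs
  have hr : Real.sqrt (a ^ 2 + b * s) ^ 2 = a ^ 2 + b * s :=
    Real.sq_sqrt (by nlinarith)
  rw [div_eq_div_iff (by positivity) (by nlinarith)]
  nlinarith [hr]

private lemma sqrt_tendsto_atTop' : Filter.Tendsto Real.sqrt Filter.atTop Filter.atTop := by
  apply Filter.tendsto_atTop_atTop_of_monotone (fun x y h => Real.sqrt_le_sqrt h)
  intro b
  exact ⟨(b ⊔ 0) ^ 2, by
    rw [Real.sqrt_sq (le_max_right _ _)]; exact le_max_left _ _⟩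

/-- Core analytic claim in the proof of Lemma 6: the function (47)
`f(t) = Σ_k (W̄_k + √(W̄_k² + 4 W_k ε_k (α_k + t)))/(2(α_k + t)) − R − Σ_k ε_k`
is strictly decreasing on `(max_k(−α_k), ∞)`, tends to `+∞` at the left endpoint,
tends to the negative limit `−R − Σ_k ε_k` at `+∞`, and hence has exactly one
zero on that interval. -/
theorem stmt13 (K : ℕ) (hK : 1 ≤ K)
    (W ε α : Fin K → ℝ) (hW : ∀ k, 0 < W k) (hε : ∀ k, 0 < ε k)
    (N : ℕ) (hN : 1 ≤ N) (R : ℝ) (hR : 0 < R) :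
    let Wb : Fin K → ℝ := fun k => W k * ((N : ℝ) - 1)
    let T : ℝ := Finset.univ.sup' ⟨(⟨0, hK⟩ : Fin K), Finset.mem_univ _⟩
      (fun k => -α k)
    let f : ℝ → ℝ := fun t =>
      (∑ k, (Wb k + Real.sqrt (Wb k ^ 2 + 4 * W k * ε k * (α k + t))) /
        (2 * (α k + t))) - R - ∑ k, ε k
    StrictAntiOn f (Set.Ioi T) ∧
    Filter.Tendsto f (nhdsWithin T (Set.Ioi T)) Filter.atTop ∧
    Filter.Tendsto f Filter.atTop (nhds (-R - ∑ k, ε k)) ∧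
    (-R - ∑ k, ε k < 0) ∧
    (∃! t : ℝ, t ∈ Set.Ioi T ∧ f t = 0) := by
  intro Wb T f
  have hne : (Finset.univ : Finset (Fin K)).Nonempty :=
    ⟨⟨0, hK⟩, Finset.mem_univ _⟩
  have haW : ∀ k, 0 ≤ Wb k := fun k => by
    have : (1 : ℝ) ≤ (N : ℝ) := by exact_mod_cast hN
    have := (hW k).le
    simp only [Wb]; nlinarith
  have hb : ∀ k, (0:ℝ) < 4 * W k * ε k := fun k => by
    have h1 := hW k; have h2 := hε k; positivity
  have hT : ∀ k, -α k ≤ T := fun k => by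
    show -α k ≤ Finset.univ.sup' ⟨(⟨0, hK⟩ : Fin K), Finset.mem_univ _⟩
      (fun k => -α k)
    exact Finset.le_sup' (fun k => -α k) (Finset.mem_univ k)
  have hs : ∀ k, ∀ t ∈ Set.Ioi T, 0 < α k + t := fun k t ht => by
    have := hT k; simp only [Set.mem_Ioi] at ht; linarith
  -- the denominator function
  set D : Fin K → ℝ → ℝ := fun k t =>
    Real.sqrt (Wb k ^ 2 + 4 * W k * ε k * (α k + t)) - Wb k with hD
  have hDpos : ∀ k, ∀ t ∈ Set.Ioi T, 0 < D k t := fun k t ht => by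
    have := sqrt_gt' (Wb k) (4 * W k * ε k) (α k + t) (haW k) (hb k) (hs k t ht)
    simp only [hD]; linarith
  have hfg : ∀ t ∈ Set.Ioi T,
      f t = (∑ k, (4 * W k * ε k) / (2 * D k t)) - R - ∑ k, ε k := by
    intro t ht
    simp only [f, hD]
    congr 2
    refine Finset.sum_congr rfl fun k _ => ?_
    exact key' (Wb k) (4 * W k * ε k) (α k + t) (haW k) (hb k) (hs k t ht)
  have hDmono : ∀ k, ∀ t₁ ∈ Set.Ioi T, ∀ t₂ ∈ Set.Ioi T, t₁ < t₂ →
      D k t₁ < D k t₂ := by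
    intro k t₁ h₁ t₂ h₂ h12
    have h1 : (0:ℝ) ≤ Wb k ^ 2 + 4 * W k * ε k * (α k + t₁) := by
      have := hs k t₁ h₁; have := hb k; nlinarith [sq_nonneg (Wb k)]
    have h2 : Wb k ^ 2 + 4 * W k * ε k * (α k + t₁)
        < Wb k ^ 2 + 4 * W k * ε k * (α k + t₂) := by
      have := hb k; nlinarith
    simpa only [hD, sub_lt_sub_iff_right] using Real.sqrt_lt_sqrt h1 h2
  -- 1. strict antitonicity
  have hanti : StrictAntiOn f (Set.Ioi T) := by
    intro t₁ h₁ t₂ h₂ h12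
    rw [hfg t₁ h₁, hfg t₂ h₂]
    have : (∑ k, (4 * W k * ε k) / (2 * D k t₂))
        < ∑ k, (4 * W k * ε k) / (2 * D k t₁) := by
      refine Finset.sum_lt_sum_of_nonempty hne fun k _ => ?_
      exact div_lt_div_of_pos_left (hb k) (by linarith [hDpos k t₁ h₁])
        (by linarith [hDmono k t₁ h₁ t₂ h₂ h12])
    linarith
  -- continuity of f on Ioi T
  have hcont : ContinuousOn f (Set.Ioi T) := by
    apply ContinuousOn.sub (ContinuousOn.sub ?_ continuousOn_const) continuousOn_const
    refine continuousOn_finset_sum _ fun k _ => ContinuousOn.div ?_ ?_ ?_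
    · exact (Continuous.add continuous_const
        ((Real.continuous_sqrt).comp
          (continuous_const.add (continuous_const.mul
            (continuous_const.add continuous_id))))).continuousOn
    · exact (continuous_const.mul
        (continuous_const.add continuous_id)).continuousOn
    · intro t ht; have := hs k t ht; positivity
  -- 2. tendsto atTop at the left endpoint
  obtain ⟨k₀, -, hk₀⟩ := Finset.exists_mem_eq_sup' hne (fun k => -α k)
  have hTeq : T = -α k₀ := hk₀
  have hTk₀ : α k₀ + T = 0 := by rw [hTeq]; ring
  have htendD : Filter.Tendsto (fun t => D k₀ t) (nhdsWithin T (Set.Ioi T))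
      (nhdsWithin 0 (Set.Ioi 0)) := by
    apply tendsto_nhdsWithin_of_tendsto_nhds_of_eventually_within
    · have hc : Continuous (fun t => D k₀ t) := by
        simp only [hD]
        exact ((Real.continuous_sqrt).comp
          (continuous_const.add (continuous_const.mul
            (continuous_const.add continuous_id)))).sub continuous_const
      have := hc.tendsto T
      have hval : D k₀ T = 0 := by
        simp only [hD, hTk₀, mul_zero, add_zero, Real.sqrt_sq (haW k₀), sub_self]
      rw [hval] at this
      exact this.mono_left nhdsWithin_le_nhds
    · exact eventually_nhdsWithin_of_forall fun t ht => hDpos k₀ t ht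
  have htop : Filter.Tendsto f (nhdsWithin T (Set.Ioi T)) Filter.atTop := by
    have hterm : Filter.Tendsto
        (fun t => (4 * W k₀ * ε k₀) / (2 * D k₀ t) - R - ∑ k, ε k)
        (nhdsWithin T (Set.Ioi T)) Filter.atTop := by
      apply Filter.tendsto_atTop_add_const_right
      apply Filter.tendsto_atTop_add_const_right
      have h2D : Filter.Tendsto (fun t => 2 * D k₀ t) (nhdsWithin T (Set.Ioi T))
          (nhdsWithin 0 (Set.Ioi 0)) := by
        have : Filter.Tendsto (fun x : ℝ => 2 * x) (nhdsWithin 0 (Set.Ioi 0))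
            (nhdsWithin 0 (Set.Ioi 0)) := by
          apply tendsto_nhdsWithin_of_tendsto_nhds_of_eventually_within
          · have hc2 : Continuous (fun x : ℝ => 2 * x) :=
              continuous_const.mul continuous_id
            have := (hc2.tendsto (0:ℝ)).mono_left
              (nhdsWithin_le_nhds (s := Set.Ioi (0:ℝ)))
            simpa using this
          · exact eventually_nhdsWithin_of_forall fun x hx => by
              simp only [Set.mem_Ioi] at *; linarith
        exact this.comp htendD
      have := h2D.inv_tendsto_nhdsGT_zero
      simpa [div_eq_mul_inv] using this.const_mul_atTop (hb k₀)
    apply Filter.tendsto_atTop_mono' _ _ hterm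
    filter_upwards [self_mem_nhdsWithin] with t ht
    rw [hfg t ht]
    have hles : (4 * W k₀ * ε k₀) / (2 * D k₀ t)
        ≤ ∑ k, (4 * W k * ε k) / (2 * D k t) := by
      apply Finset.single_le_sum (f := fun k => (4 * W k * ε k) / (2 * D k t))
        (fun k _ => ?_) (Finset.mem_univ k₀)
      have := hDpos k t ht; have := (hb k).le; positivity
    linarith
  -- 3. tendsto at +∞
  have hlim : Filter.Tendsto f Filter.atTop (nhds (-R - ∑ k, ε k)) := by
    have hsum : Filter.Tendsto (fun t => ∑ k, (4 * W k * ε k) / (2 * D k t))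
        Filter.atTop (nhds 0) := by
      have : Filter.Tendsto (fun t => ∑ k, (4 * W k * ε k) / (2 * D k t))
          Filter.atTop (nhds (∑ _k : Fin K, (0:ℝ))) := by
        refine tendsto_finset_sum _ fun k _ => ?_
        apply Filter.Tendsto.div_atTop (tendsto_const_nhds)
        have harg : Filter.Tendsto (fun t => Wb k ^ 2 + 4 * W k * ε k * (α k + t))
            Filter.atTop Filter.atTop := by
          apply Filter.tendsto_atTop_add_const_left
          apply Filter.Tendsto.const_mul_atTop (hb k)
          exact Filter.tendsto_atTop_add_const_left _ _ Filter.tendsto_id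
        have := sqrt_tendsto_atTop'.comp harg
        have h2 : Filter.Tendsto (fun t => D k t) Filter.atTop Filter.atTop := by
          simpa only [hD, Function.comp_apply, sub_eq_add_neg] using Filter.tendsto_atTop_add_const_right _ _ this
        exact h2.const_mul_atTop (by norm_num : (0:ℝ) < 2)
      simpa using this
    have : Filter.Tendsto (fun t => (∑ k, (4 * W k * ε k) / (2 * D k t)) - R - ∑ k, ε k)
        Filter.atTop (nhds (0 - R - ∑ k, ε k)) :=
      (hsum.sub tendsto_const_nhds).sub tendsto_const_nhds
    rw [show (0:ℝ) - R - ∑ k, ε k = -R - ∑ k, ε k by ring] at this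
    apply this.congr'
    filter_upwards [Filter.eventually_gt_atTop T] with t ht
    exact (hfg t ht).symm
  -- 4. negativity
  have hneg : -R - ∑ k, ε k < 0 := by
    have : (0:ℝ) < ∑ k, ε k := Finset.sum_pos (fun k _ => hε k) hne
    linarith
  refine ⟨hanti, htop, hlim, hneg, ?_⟩
  -- 5. existence and uniqueness of the zero
  -- find t₀ > T with f t₀ > 0
  obtain ⟨t₀, ht₀T, ht₀pos⟩ : ∃ t₀, t₀ ∈ Set.Ioi T ∧ 0 < f t₀ := by
    have h1 : ∀ᶠ t in nhdsWithin T (Set.Ioi T), 0 < f t :=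
      htop.eventually (Filter.eventually_gt_atTop 0)
    have h2 : ∀ᶠ t in nhdsWithin T (Set.Ioi T), t ∈ Set.Ioi T :=
      self_mem_nhdsWithin
    exact (h2.and h1).exists
  -- find t₁ > t₀ with f t₁ < 0
  obtain ⟨t₁, ht₁gt, ht₁neg⟩ : ∃ t₁, t₀ < t₁ ∧ f t₁ < 0 := by
    have h1 : ∀ᶠ t in Filter.atTop, f t < 0 :=
      hlim.eventually (eventually_lt_nhds hneg)
    exact ((Filter.eventually_gt_atTop t₀).and h1).exists
  have ht₁T : t₁ ∈ Set.Ioi T := lt_trans ht₀T ht₁gt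
  have hsub : Set.Icc t₀ t₁ ⊆ Set.Ioi T := fun x hx =>
    lt_of_lt_of_le ht₀T hx.1
  have : (0:ℝ) ∈ Set.Icc (f t₁) (f t₀) := ⟨ht₁neg.le, ht₀pos.le⟩
  obtain ⟨c, hcmem, hfc⟩ := intermediate_value_Icc' ht₁gt.le (hcont.mono hsub) this
  have hcT : c ∈ Set.Ioi T := hsub hcmem
  refine ⟨c, ⟨hcT, hfc⟩, ?_⟩
  rintro y ⟨hyT, hfy⟩
  rcases lt_trichotomy y c with h | h | h
  · have := hanti hyT hcT h; rw [hfy, hfc] at this; linarith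
  · exact h
  · have := hanti hcT hyT h; rw [hfy, hfc] at this; linarith
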